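/- arXiv:1809.08574 — 2 statements merged into one kernel-verified Lean document; each statement's English description precedes it below -/
import Mathlib

section
/- Let $n \geq 4$, $k \geq 2$, $d \geq 1$ be integers with $2 \leq k \leq n-1$. There exist rational numbers $x,y,z,w,u$ with $0 \leq x,y,z,w,u < 1$ satisfying $z - u < 1$, $y - dx + dz < k+1-(n-k)d$, $x - y - z + w < n - 2k + 1$, and $y - w + u < k - 1$, if and only if either ($d = 1$ and $n \in \{2k-2, 2k-1, 2k, 2k+1\}$) or $(n,k,d) \in \{(4,2,2), (4,3,2), (5,3,2)\}$. -/
theorem stmt_2 (n k d : ℤ) (hn : 4 ≤ n) (hk : 2 ≤ k) (hkn : k ≤ n - 1) (hd : 1 ≤ d) :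
    (∃ x y z w u : ℚ,
      (0 ≤ x ∧ x < 1) ∧ (0 ≤ y ∧ y < 1) ∧ (0 ≤ z ∧ z < 1) ∧ (0 ≤ w ∧ w < 1) ∧
      (0 ≤ u ∧ u < 1) ∧
      z - u < 1 ∧
      y - d * x + d * z < (k : ℚ) + 1 - ((n : ℚ) - k) * d ∧
      x - y - z + w < (n : ℚ) - 2 * k + 1 ∧
      y - w + u < (k : ℚ) - 1) ↔
    ((d = 1 ∧ (n = 2 * k - 2 ∨ n = 2 * k - 1 ∨ n = 2 * k ∨ n = 2 * k + 1)) ∨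
      (n = 4 ∧ k = 2 ∧ d = 2) ∨ (n = 4 ∧ k = 3 ∧ d = 2) ∨ (n = 5 ∧ k = 3 ∧ d = 2)) := by
  have hkQ : (2:ℚ) ≤ (k:ℚ) := by exact_mod_cast hk
  constructor
  · rintro ⟨x, y, z, w, u, ⟨hx0, hx1⟩, ⟨hy0, hy1⟩, ⟨hz0, hz1⟩, ⟨hw0, hw1⟩, ⟨hu0, hu1⟩,
      hA, hB, hC, hD⟩
    have hdQ : (1:ℚ) ≤ (d:ℚ) := by exact_mod_cast hd
    have hdpos : (0:ℚ) < (d:ℚ) := by linarith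
    -- P1 : (n-k-1)*d ≤ k
    have hP1Q : ((n:ℚ) - k - 1) * d < (k:ℚ) + 1 := by
      nlinarith [mul_lt_mul_of_pos_left hx1 hdpos, mul_nonneg (le_of_lt hdpos) hz0]
    have hP1 : (n - k - 1) * d ≤ k := by
      have h : ((n - k - 1) * d : ℤ) < k + 1 := by
        have : (((n - k - 1) * d : ℤ) : ℚ) < ((k + 1 : ℤ) : ℚ) := by push_cast; nlinarith [hP1Q]
        exact_mod_cast this
      omega
    -- P2 : 2k - 2 ≤ n
    have hP2 : 2 * k - 2 ≤ n := by
      have h : (-2 : ℤ) < n - 2 * k + 1 := by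
        have : ((-2 : ℤ) : ℚ) < ((n - 2 * k + 1 : ℤ) : ℚ) := by push_cast; linarith
        exact_mod_cast this
      omega
    -- P3 : if 2 ≤ d then (k-2)*d ≤ k-1
    have hP3 : 2 ≤ d → (k - 2) * d ≤ k - 1 := by
      intro hd2
      have hd2Q : (2:ℚ) ≤ (d:ℚ) := by exact_mod_cast hd2
      have hQ : ((k:ℚ) - 2) * d < (k:ℚ) := by
        nlinarith [mul_lt_mul_of_pos_left hC hdpos,
          mul_pos (show (0:ℚ) < (d:ℚ) - 1 by linarith) (show (0:ℚ) < 1 - y by linarith),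
          mul_nonneg (le_of_lt hdpos) hw0]
      have h : ((k - 2) * d : ℤ) < k := by
        have : (((k - 2) * d : ℤ) : ℚ) < ((k : ℤ) : ℚ) := by push_cast; nlinarith [hQ]
        exact_mod_cast this
      omega
    -- integer endgame
    rcases (show d = 1 ∨ 2 ≤ d by omega) with hd1 | hd2
    · subst hd1
      left
      constructor
      · rfl
      · have : n - k - 1 ≤ k := by simpa using hP1
        omega
    · have hP3' := hP3 hd2
      have hk3 : k ≤ 3 := by
        nlinarith [mul_nonneg (show (0:ℤ) ≤ k - 2 by omega) (show (0:ℤ) ≤ d - 2 by omega)]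
      have hnkd : 0 ≤ (n - k - 1) * (d - 2) := by
        exact mul_nonneg (by omega) (by omega)
      rcases (show k = 2 ∨ k = 3 by omega) with hk2 | hk3'
      · subst hk2
        have hn4 : n ≤ 4 := by nlinarith
        have hne : n = 4 := by omega
        subst hne
        have hdle : d ≤ 2 := by nlinarith
        right; left
        exact ⟨rfl, rfl, by omega⟩
      · subst hk3'
        have hdle : d ≤ 2 := by omega
        have hde : d = 2 := by omega
        subst hde
        have hn5 : n ≤ 5 := by nlinarith
        rcases (show n = 4 ∨ n = 5 by omega) with h4 | h5
        · subst h4; right; right; left; exact ⟨rfl, rfl, rfl⟩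
        · subst h5; right; right; right; exact ⟨rfl, rfl, rfl⟩
  · rintro (⟨hd1, hncase⟩ | ⟨hn4, hk2, hd2⟩ | ⟨hn4, hk3, hd2⟩ | ⟨hn5, hk3, hd2⟩)
    · subst hd1
      rcases hncase with h | h | h | h
      · subst h
        exact ⟨0, 3/4, 3/4, 0, 0, by norm_num, by norm_num, by norm_num, by norm_num,
          by norm_num, by norm_num, by push_cast; linarith, by push_cast; linarith,
          by push_cast; linarith⟩
      · subst h
        exact ⟨0, 3/4, 3/4, 0, 0, by norm_num, by norm_num, by norm_num, by norm_num,
          by norm_num, by norm_num, by push_cast; linarith, by push_cast; linarith,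
          by push_cast; linarith⟩
      · subst h
        exact ⟨0, 0, 0, 0, 0, by norm_num, by norm_num, by norm_num, by norm_num,
          by norm_num, by norm_num, by push_cast; linarith, by push_cast; linarith,
          by push_cast; linarith⟩
      · subst h
        exact ⟨3/4, 0, 0, 0, 0, by norm_num, by norm_num, by norm_num, by norm_num,
          by norm_num, by norm_num, by push_cast; linarith, by push_cast; linarith,
          by push_cast; linarith⟩
    · subst hn4; subst hk2; subst hd2
      exact ⟨3/4, 0, 0, 0, 0, by norm_num, by norm_num, by norm_num, by norm_num,
        by norm_num, by norm_num, by norm_num, by norm_num, by norm_num⟩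
    · subst hn4; subst hk3; subst hd2
      exact ⟨1/4, 3/4, 3/4, 0, 0, by norm_num, by norm_num, by norm_num, by norm_num,
        by norm_num, by norm_num, by norm_num, by norm_num, by norm_num⟩
    · subst hn5; subst hk3; subst hd2
      exact ⟨1/2, 3/4, 0, 0, 0, by norm_num, by norm_num, by norm_num, by norm_num,
        by norm_num, by norm_num, by norm_num, by norm_num, by norm_num⟩
end

section
/- Let $k \geq 2$ and $d \geq 2$ be integers, and suppose $n$ is an integer with $n \geq 4$ and $k \leq n-1$. If there exist rational numbers $x,y,z,w \in [0,1)$ with $y - dx + dz < k+1-(n-k)d$ and $x - y - z + w < n-2k+1$, then $k < 2 + \frac{2}{d-1}$; in particular $k \in \{2,3\}$ and if $k = 3$ then $d = 2$. -/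
theorem stmt_3 (n k d : ℤ) (hn : 4 ≤ n) (hk : 2 ≤ k) (hd : 2 ≤ d) (hkn : k ≤ n - 1)
    (h : ∃ x y z w : ℚ,
      (0 ≤ x ∧ x < 1) ∧ (0 ≤ y ∧ y < 1) ∧ (0 ≤ z ∧ z < 1) ∧ (0 ≤ w ∧ w < 1) ∧
      y - d * x + d * z < (k : ℚ) + 1 - ((n : ℚ) - k) * d ∧
      x - y - z + w < (n : ℚ) - 2 * k + 1) :
    (k : ℚ) < 2 + 2 / ((d : ℚ) - 1) ∧ (k = 2 ∨ k = 3) ∧ (k = 3 → d = 2) := by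
  obtain ⟨x, y, z, w, ⟨hx0, hx1⟩, ⟨hy0, hy1⟩, ⟨hz0, hz1⟩, ⟨hw0, hw1⟩, h1, h2⟩ := h
  have hdq : (2 : ℚ) ≤ (d : ℚ) := by exact_mod_cast hd
  have hq : (0 : ℚ) < (d : ℚ) - 1 := by linarith
  have key : (k : ℚ) * ((d : ℚ) - 1) < 2 * ((d : ℚ) - 1) + 2 := by
    have A : x - z - y < (n : ℚ) - 2 * k + 1 := by linarith
    have B : x - z < (n : ℚ) - 2 * k + 2 := by linarith
    nlinarith [mul_lt_mul_of_pos_left B hq, hq]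
  have h3 : (k : ℚ) < 2 + 2 / ((d : ℚ) - 1) := by
    rw [add_div' _ _ _ (ne_of_gt hq), lt_div_iff₀ hq]
    linarith
  refine ⟨h3, ?_, ?_⟩
  · have : k < 4 := by
      have h2d : 2 / ((d : ℚ) - 1) ≤ 2 := by
        rw [div_le_iff₀ hq]; linarith
      have : (k : ℚ) < 4 := by linarith
      exact_mod_cast this
    omega
  · intro hk3
    subst hk3
    by_contra hd2
    have hd3 : 3 ≤ d := by omega
    have : (3 : ℚ) ≤ (d : ℚ) := by exact_mod_cast hd3
    have h2d : 2 / ((d : ℚ) - 1) ≤ 1 := by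
      rw [div_le_iff₀ hq]; linarith
    push_cast at h3
    linarith
end
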